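/- Let S and T be tree modules of Q and let (S,U_S) and (T,U_T) be cells of Schurian representations. Suppose that Hom(T(μ),S(λ)) = 0 for all (λ,μ) ∈ U_S × U_T, and that R_{S,T} = {e_1, …, e_n} ⊆ R(S,T) is a universal tree-shaped basis for (U_T,U_S), i.e. it consists of standard basis vectors with respect to fixed tree bases of S and T and represents a basis of Ext(S(λ),T(μ)) for all (μ,λ) ∈ U_T × U_S. Then there exist tree modules B_1, …, B_n, namely the middle terms of the short exact sequences 0 → T → B_i → S → 0 determined by the e_i, and affine subspaces A_i ⊆ R(B_i,B_i) with dim A_i = i − 1 for i = 1,…,n, such that each (B_i,A_i) is a cell of indecomposable representations and the collection {(B_i,A_i) : i = 1,…,n} is a mosaic of indecomposable representations; in particular, every representation B_i(ν) with ν ∈ A_i is indecomposable, B_i(ν) ≅ B_i(ν') implies ν = ν', and B_i(ν) ≅ B_j(ν') implies i = j. -/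

import Mathlib

namespace QuivRep

variable (k : Type) [Field k] {V A : Type} (s t : A → V)

/-- `RSp k s t X Y` is R(N,M) = ⊕_{a∈Q_1} Hom_k(N_{s(a)}, M_{t(a)}) where the
representation `N` has vertex spaces `X` and `M` has vertex spaces `Y`. -/
abbrev RSp (X Y : V → Type) [∀ q, AddCommGroup (X q)] [∀ q, Module k (X q)]
    [∀ q, AddCommGroup (Y q)] [∀ q, Module k (Y q)] : Type :=
  ∀ a : A, X (s a) →ₗ[k] Y (t a)

variable {X Y : V → Type}
  [∀ q, AddCommGroup (X q)] [∀ q, Module k (X q)]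
  [∀ q, AddCommGroup (Y q)] [∀ q, Module k (Y q)]

/-- The linear map `d_{N,M}` whose cokernel is Ext(N,M). Here `Nm` are the arrow
maps of `N` (on spaces `X`) and `Mm` those of `M` (on spaces `Y`). -/
def dMap (Nm : RSp k s t X X) (Mm : RSp k s t Y Y) :
    (∀ q, X q →ₗ[k] Y q) →ₗ[k] RSp k s t X Y where
  toFun f := fun a => (f (t a)).comp (Nm a) - (Mm a).comp (f (s a))
  map_add' f g := by
    funext a; ext x
    simp only [Pi.add_apply, LinearMap.add_comp, LinearMap.comp_add, LinearMap.sub_apply,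
      LinearMap.add_apply, LinearMap.comp_apply]
    abel
  map_smul' c f := by
    funext a; ext x
    simp [smul_sub]

/-- `f : M → N` is a morphism of representations (`M` on spaces `X`, `N` on spaces `Y`). -/
def IsRHom (Mm : RSp k s t X X) (Nm : RSp k s t Y Y) (f : ∀ q, X q →ₗ[k] Y q) : Prop :=
  ∀ a, (f (t a)).comp (Mm a) = (Nm a).comp (f (s a))

/-- Isomorphism of representations. -/
def RIso (Mm : RSp k s t X X) (Nm : RSp k s t Y Y) : Prop :=
  ∃ f : ∀ q, X q →ₗ[k] Y q, IsRHom k s t Mm Nm f ∧ ∀ q, Function.Bijective (f q)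

/-- A family of submodules is a subrepresentation. -/
def IsSubRep (Mm : RSp k s t X X) (U : ∀ q, Submodule k (X q)) : Prop :=
  ∀ a, ∀ x ∈ U (s a), Mm a x ∈ U (t a)

/-- Indecomposability: nonzero, and no nontrivial internal direct sum decomposition. -/
def Indec (Mm : RSp k s t X X) : Prop :=
  (∃ q, ∃ x : X q, x ≠ 0) ∧
  ∀ U W : ∀ q, Submodule k (X q), IsSubRep k s t Mm U → IsSubRep k s t Mm W →
    (∀ q, U q ⊓ W q = ⊥) → (∀ q, U q ⊔ W q = ⊤) →
    (∀ q, U q = ⊥) ∨ (∀ q, W q = ⊥)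

/-- The middle term `B(f,λ,μ)` of the extension determined by `f ∈ R(N,M)`:
vertex spaces `Y q × X q`, arrow maps `[[Mm, f],[0, Nm]]`. -/
def BExt (Mm : RSp k s t Y Y) (Nm : RSp k s t X X) (f : RSp k s t X Y) :
    RSp k s t (fun q => Y q × X q) (fun q => Y q × X q) :=
  fun a => LinearMap.prod
    ((Mm a).comp (LinearMap.fst k (Y (s a)) (X (s a))) +
      (f a).comp (LinearMap.snd k (Y (s a)) (X (s a))))
    ((Nm a).comp (LinearMap.snd k (Y (s a)) (X (s a))))

/-- `U` is strong: every deformation `M(λ)`, `λ ∈ U`, is indecomposable. -/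
def Strong (Mm : RSp k s t X X) (U : Set (RSp k s t X X)) : Prop :=
  ∀ lam ∈ U, Indec k s t (Mm + lam)

/-- `U` is separating: `M(λ) ≅ M(μ)` implies `λ = μ` for `λ, μ ∈ U`. -/
def Separating (Mm : RSp k s t X X) (U : Set (RSp k s t X X)) : Prop :=
  ∀ lam ∈ U, ∀ mu ∈ U, RIso k s t (Mm + lam) (Mm + mu) → lam = mu

/-- `End(M) = k·id`. -/
def EndTrivial (Mm : RSp k s t X X) : Prop :=
  ∀ f : ∀ q, X q →ₗ[k] X q, IsRHom k s t Mm Mm f → ∃ c : k, ∀ q, f q = c • LinearMap.id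

/-- `Hom(M,N) = 0`. -/
def HomZero (Mm : RSp k s t X X) (Nm : RSp k s t Y Y) : Prop :=
  ∀ f : ∀ q, X q →ₗ[k] Y q, IsRHom k s t Mm Nm f → f = 0

end QuivRep


open QuivRep

section Tree

variable {k : Type} [Field k] {V A : Type} [Fintype V] [Fintype A] [DecidableEq A]
variable (s t : A → V)

variable {XS XT : V → Type}
  [∀ q, AddCommGroup (XS q)] [∀ q, Module k (XS q)] [∀ q, FiniteDimensional k (XS q)]
  [∀ q, AddCommGroup (XT q)] [∀ q, Module k (XT q)] [∀ q, FiniteDimensional k (XT q)]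

/-- The coefficient-quiver adjacency (in either direction) on the vertex set
`Σ q, ι q` of a homogeneous basis. -/
def coeffAdj (Mm : RSp k s t XS XS) {ι : V → Type} (Bas : ∀ q, Module.Basis (ι q) k (XS q))
    (v w : Σ q, ι q) : Prop :=
  ∃ (a : A) (b' : ι (s a)) (b : ι (t a)),
    ((Bas (t a)).repr ((Mm a) ((Bas (s a)) b'))) b ≠ 0 ∧
    ((v = ⟨s a, b'⟩ ∧ w = ⟨t a, b⟩) ∨ (w = ⟨s a, b'⟩ ∧ v = ⟨t a, b⟩))

/-- The underlying (simple) graph of the coefficient quiver. -/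
def coeffGraph (Mm : RSp k s t XS XS) {ι : V → Type}
    (Bas : ∀ q, Module.Basis (ι q) k (XS q)) : SimpleGraph (Σ q, ι q) where
  Adj v w := v ≠ w ∧ coeffAdj s t Mm Bas v w
  symm := ⟨by
    rintro v w ⟨hne, a, b', b, hc, h⟩
    exact ⟨hne.symm, a, b', b, hc, h.symm⟩⟩
  loopless := ⟨fun v h => h.1 rfl⟩

/-- `Bas` is a tree basis: the coefficient quiver is connected and has exactly one
fewer arrow than it has vertices. -/
def IsTreeBasis (Mm : RSp k s t XS XS) {ι : V → Type}
    (Bas : ∀ q, Module.Basis (ι q) k (XS q)) : Prop :=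
  (coeffGraph s t Mm Bas).Connected ∧
  Nat.card {p : (a : A) × ι (s a) × ι (t a) //
      ((Bas (t p.1)).repr ((Mm p.1) ((Bas (s p.1)) p.2.1))) p.2.2 ≠ 0} + 1 =
    Nat.card (Σ q, ι q)

/-- A tree module: an indecomposable representation admitting a tree basis. -/
def IsTreeModule (Mm : RSp k s t XS XS) : Prop :=
  Indec k s t Mm ∧
  ∃ (ι : V → Type) (Bas : ∀ q, Module.Basis (ι q) k (XS q)), IsTreeBasis s t Mm Bas

/-- The standard basis vector of `R(S,T)` (w.r.t. homogeneous bases of `S` and `T`)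
supported at the arrow `a0`, sending the basis vector `b'` of `S_{s(a0)}` to the basis
vector `b` of `T_{t(a0)}`. -/
noncomputable def stdVec {ιS ιT : V → Type}
    (BasS : ∀ q, Module.Basis (ιS q) k (XS q)) (BasT : ∀ q, Module.Basis (ιT q) k (XT q))
    (a0 : A) (b' : ιS (s a0)) (b : ιT (t a0)) : RSp k s t XS XT :=
  fun a =>
    if h : a = a0 then by
      subst h
      classical
      exact (BasS (s a)).constr k (fun c => if c = b' then (BasT (t a)) b else 0)
    else 0

section Aux
variable {k : Type} [Field k] {V A : Type} [Fintype V] [Fintype A] [DecidableEq A]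
variable (s t : A → V)
variable {XS XT : V → Type}
  [∀ q, AddCommGroup (XS q)] [∀ q, Module k (XS q)] [∀ q, FiniteDimensional k (XS q)]
  [∀ q, AddCommGroup (XT q)] [∀ q, Module k (XT q)] [∀ q, FiniteDimensional k (XT q)]

/-- embedding of R(S,T) into R(B,B) as the upper-right block -/
def embB : RSp k s t XS XT →ₗ[k]
    RSp k s t (fun q => XT q × XS q) (fun q => XT q × XS q) where
  toFun g := fun a => (LinearMap.inl k (XT (t a)) (XS (t a))).comp
    ((g a).comp (LinearMap.snd k (XT (s a)) (XS (s a))))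
  map_add' g h := by funext a; ext x <;> simp
  map_smul' c g := by funext a; ext x <;> simp

@[simp] lemma embB_apply (g : RSp k s t XS XT) (a : A) (p : XT (s a) × XS (s a)) :
    embB s t g a p = (g a p.2, 0) := rfl

lemma embB_inj : Function.Injective (embB (k := k) s t (XS := XS) (XT := XT)) := by
  intro g h hgh
  funext a; ext x
  have := congrFun hgh a
  have h2 := congrArg (fun F => (F (0, x)).1) this
  simpa using h2

lemma BExt_apply (Tm : RSp k s t XT XT) (Sm : RSp k s t XS XS) (f : RSp k s t XS XT)
    (a : A) (p : XT (s a) × XS (s a)) :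
    BExt k s t Tm Sm f a p = (Tm a p.1 + f a p.2, Sm a p.2) := rfl

lemma BExt_add (Tm : RSp k s t XT XT) (Sm : RSp k s t XS XS) (f g : RSp k s t XS XT) :
    BExt k s t Tm Sm f + embB s t g = BExt k s t Tm Sm (f + g) := by
  funext a; ext p <;>
    simp [BExt_apply, embB_apply, add_assoc]

end Aux
set_option linter.unusedSectionVars false
section Aux2
variable {k : Type} [Field k] {V A : Type} [Fintype V] [Fintype A] [DecidableEq A]
variable (s t : A → V)
variable {XS XT : V → Type}
  [∀ q, AddCommGroup (XS q)] [∀ q, Module k (XS q)] [∀ q, FiniteDimensional k (XS q)]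
  [∀ q, AddCommGroup (XT q)] [∀ q, Module k (XT q)] [∀ q, FiniteDimensional k (XT q)]

lemma keyBlocks (Tm : RSp k s t XT XT) (Sm : RSp k s t XS XS)
    (hHomTS : HomZero k s t Tm Sm) (hEndT : EndTrivial k s t Tm)
    (hEndS : EndTrivial k s t Sm)
    (f f' g : RSp k s t XS XT)
    (φ : ∀ q, (XT q × XS q) →ₗ[k] (XT q × XS q))
    (hφ : ∀ a, (φ (t a)).comp (BExt k s t Tm Sm f a)
      - (BExt k s t Tm Sm f' a).comp (φ (s a)) = embB s t g a) :
    ∃ (cT cS : k) (h12 : ∀ q, XS q →ₗ[k] XT q),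
      (∀ q (y : XT q) (x : XS q), φ q (y, x) = (cT • y + h12 q x, cS • x)) ∧
      dMap k s t Sm Tm h12 = g + cS • f' - cT • f := by
  classical
  -- blocks
  set h11 : ∀ q, XT q →ₗ[k] XT q := fun q =>
    (LinearMap.fst k (XT q) (XS q)).comp ((φ q).comp (LinearMap.inl k (XT q) (XS q))) with hh11
  set h21 : ∀ q, XT q →ₗ[k] XS q := fun q =>
    (LinearMap.snd k (XT q) (XS q)).comp ((φ q).comp (LinearMap.inl k (XT q) (XS q))) with hh21
  set h12 : ∀ q, XS q →ₗ[k] XT q := fun q =>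
    (LinearMap.fst k (XT q) (XS q)).comp ((φ q).comp (LinearMap.inr k (XT q) (XS q))) with hh12
  set h22 : ∀ q, XS q →ₗ[k] XS q := fun q =>
    (LinearMap.snd k (XT q) (XS q)).comp ((φ q).comp (LinearMap.inr k (XT q) (XS q))) with hh22
  have hEy : ∀ (a : A) (y : XT (s a)),
      φ (t a) (Tm a y, 0) - (Tm a (h11 (s a) y) + f' a (h21 (s a) y), Sm a (h21 (s a) y))
        = (0, 0) := by
    intro a y
    have := congrArg (fun F => F (y, (0 : XS (s a)))) (hφ a)
    simpa [BExt_apply, embB_apply, hh11, hh21, Prod.ext_iff, sub_eq_iff_eq_add] using this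
  have hEx : ∀ (a : A) (x : XS (s a)),
      φ (t a) (f a x, Sm a x) - (Tm a (h12 (s a) x) + f' a (h22 (s a) x), Sm a (h22 (s a) x))
        = (g a x, 0) := by
    intro a x
    have := congrArg (fun F => F ((0 : XT (s a)), x)) (hφ a)
    simpa [BExt_apply, embB_apply, hh12, hh22, Prod.ext_iff, sub_eq_iff_eq_add] using this
  -- h21 is a hom T → S, hence zero
  have h21hom : IsRHom k s t Tm Sm h21 := by
    intro a; ext y
    have := congrArg Prod.snd (hEy a y)
    simp only [Prod.snd_sub, Prod.snd_zero, sub_eq_zero] at this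
    simpa [hh21] using this
  have h21z : h21 = 0 := hHomTS h21 h21hom
  have h21z' : ∀ q (y : XT q), (φ q (y, 0)).2 = 0 := by
    intro q y
    have := congrFun h21z q
    have := congrArg (fun (F : XT q →ₗ[k] XS q) => F y) this
    simpa [hh21] using this
  -- h11 is an endomorphism of T
  have h11hom : IsRHom k s t Tm Tm h11 := by
    intro a; ext y
    have := congrArg Prod.fst (hEy a y)
    simp only [Prod.fst_sub, Prod.fst_zero, sub_eq_zero] at this
    have hz : h21 (s a) y = 0 := by rw [h21z]; rfl
    simpa [hh11, hz] using this
  obtain ⟨cT, hcT⟩ := hEndT h11 h11hom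
  -- h22 is an endomorphism of S
  have h22hom : IsRHom k s t Sm Sm h22 := by
    intro a; ext x
    have := congrArg Prod.snd (hEx a x)
    simp only [Prod.snd_sub, Prod.snd_zero, sub_eq_zero] at this
    have : (φ (t a) (f a x, 0)).2 + (φ (t a) (0, Sm a x)).2 = Sm a (h22 (s a) x) := by
      have hsplit : φ (t a) (f a x, Sm a x)
          = φ (t a) (f a x, 0) + φ (t a) (0, Sm a x) := by
        rw [← map_add]; congr 1; simp
      rw [hsplit] at this; simpa using this
    rw [h21z' (t a) (f a x), zero_add] at this
    simpa [hh22] using this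
  obtain ⟨cS, hcS⟩ := hEndS h22 h22hom
  refine ⟨cT, cS, h12, ?_, ?_⟩
  · intro q y x
    have hsplit : φ q (y, x) = φ q (y, 0) + φ q (0, x) := by
      rw [← map_add]; congr 1 <;> simp
    have h1 : (φ q (y, 0)).1 = cT • y := by
      have := congrArg (fun (F : XT q →ₗ[k] XT q) => F y) (hcT q)
      simpa [hh11] using this
    have h2 : (φ q (y, 0)).2 = 0 := h21z' q y
    have h3 : (φ q (0, x)).2 = cS • x := by
      have := congrArg (fun (F : XS q →ₗ[k] XS q) => F x) (hcS q)
      simpa [hh22] using this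
    have h4 : (φ q (0, x)).1 = h12 q x := by simp [hh12]
    rw [hsplit]
    ext
    · simp [h1, h4]
    · simp [h2, h3]
  · funext a; ext x
    have := congrArg Prod.fst (hEx a x)
    simp only [Prod.fst_sub, sub_eq_iff_eq_add, Prod.fst_zero] at this
    have hsplit : φ (t a) (f a x, Sm a x)
        = φ (t a) (f a x, 0) + φ (t a) (0, Sm a x) := by
      rw [← map_add]; congr 1 <;> simp
    have h1 : (φ (t a) (f a x, 0)).1 = cT • (f a x) := by
      have := congrArg (fun (F : XT (t a) →ₗ[k] XT (t a)) => F (f a x)) (hcT (t a))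
      simpa [hh11] using this
    have h5 : (φ (t a) (0, Sm a x)).1 = h12 (t a) (Sm a x) := by simp [hh12]
    have h6 : h22 (s a) x = cS • x := by
      have := congrArg (fun (F : XS (s a) →ₗ[k] XS (s a)) => F x) (hcS (s a))
      simpa [hh22] using this
    rw [hsplit] at this
    simp only [Prod.fst_add, h1, h5, h6] at this
    simp only [dMap, LinearMap.coe_mk, AddHom.coe_mk, LinearMap.sub_apply,
      LinearMap.comp_apply, Pi.add_apply, Pi.sub_apply, LinearMap.add_apply,
      LinearMap.smul_apply, Pi.smul_apply]
    rw [map_smul] at this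
    linear_combination (norm := abel) this
end Aux2
section Aux3
variable {k : Type} [Field k] {V A : Type} [Fintype V] [Fintype A] [DecidableEq A]
variable (s t : A → V)
variable {XS XT : V → Type}
  [∀ q, AddCommGroup (XS q)] [∀ q, Module k (XS q)] [∀ q, FiniteDimensional k (XS q)]
  [∀ q, AddCommGroup (XT q)] [∀ q, Module k (XT q)] [∀ q, FiniteDimensional k (XT q)]

/-- middle term of a non-split extension is indecomposable. -/
lemma indec_BExt (Tm : RSp k s t XT XT) (Sm : RSp k s t XS XS)
    (hHomTS : HomZero k s t Tm Sm) (hEndT : EndTrivial k s t Tm)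
    (hEndS : EndTrivial k s t Sm)
    (hTne : ∃ q, ∃ y : XT q, y ≠ 0)
    (F : RSp k s t XS XT)
    (hF : F ∉ LinearMap.range (dMap k s t Sm Tm)) :
    Indec k s t (BExt k s t Tm Sm F) := by
  obtain ⟨q0, y0, hy0⟩ := hTne
  constructor
  · exact ⟨q0, (y0, 0), by simp [Prod.ext_iff, hy0]⟩
  intro U W hU hW hUW hUsup
  have hcompl : ∀ q, IsCompl (U q) (W q) := fun q =>
    ⟨disjoint_iff.mpr (hUW q), codisjoint_iff.mpr (hUsup q)⟩
  set φ : ∀ q, (XT q × XS q) →ₗ[k] (XT q × XS q) := fun q =>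
    (U q).subtype.comp (Submodule.projectionOnto (U q) (W q) (hcompl q)) with hφdef
  have hφU : ∀ q (x : XT q × XS q), x ∈ U q → φ q x = x := by
    intro q x hx
    simp [hφdef, Submodule.projectionOnto_apply_of_mem_left (hcompl q) hx]
  have hφW : ∀ q (x : XT q × XS q), x ∈ W q → φ q x = 0 := by
    intro q x hx
    simp [hφdef, Submodule.projectionOnto_apply_of_mem_right (hcompl q) hx]
  have hφmem : ∀ q x, φ q x ∈ U q := fun q x => (Submodule.projectionOnto (U q) (W q) (hcompl q) x).2
  have hhom : ∀ a, (φ (t a)).comp (BExt k s t Tm Sm F a)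
      - (BExt k s t Tm Sm F a).comp (φ (s a)) = embB s t 0 a := by
    intro a
    rw [map_zero]
    have : ∀ p : XT (s a) × XS (s a),
        φ (t a) (BExt k s t Tm Sm F a p) = BExt k s t Tm Sm F a (φ (s a) p) := by
      intro p
      have hp : p ∈ U (s a) ⊔ W (s a) := by rw [hUsup]; trivial
      obtain ⟨u, hu, w, hw, rfl⟩ := Submodule.mem_sup.mp hp
      rw [map_add, map_add (φ (s a)), hφU _ u hu, hφW _ w hw, map_add]
      rw [hφU _ _ (hU a u hu), hφW _ _ (hW a w hw)]
      simp
    apply LinearMap.ext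
    intro p
    simp [this p]
  obtain ⟨cT, cS, h12, hform, hd⟩ :=
    keyBlocks s t Tm Sm hHomTS hEndT hEndS F F 0 φ hhom
  have hcc : cS = cT := by
    by_contra hne
    apply hF
    refine ⟨(cS - cT)⁻¹ • h12, ?_⟩
    rw [map_smul, hd]
    rw [zero_add, ← sub_smul, smul_smul, inv_mul_cancel₀ (sub_ne_zero.mpr hne), one_smul]
  subst hcc
  -- idempotency
  have hidem : ∀ q x, φ q (φ q x) = φ q x := fun q x => hφU q (φ q x) (hφmem q x)
  have hc2 : cS * cS = cS := by
    have hid := hidem q0 (y0, 0)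
    rw [hform q0 y0 0, hform q0 (cS • y0 + h12 q0 0) (cS • (0 : XS q0))] at hid
    have h1 := congrArg Prod.fst hid
    simp only [map_zero, add_zero, smul_smul, smul_zero] at h1
    have h2 : (cS * cS - cS) • y0 = 0 := by
      rw [sub_smul, h1]; simp
    rcases smul_eq_zero.mp h2 with h | h
    · exact sub_eq_zero.mp h
    · exact absurd h hy0
  have hc01 : cS = 0 ∨ cS = 1 := by
    have hz : cS * (cS - 1) = 0 := by rw [mul_sub, mul_one, hc2, sub_self]
    rcases mul_eq_zero.mp hz with h | h
    · exact Or.inl h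
    · exact Or.inr (sub_eq_zero.mp h)
  have h12z : ∀ q (x : XS q), h12 q x = 0 := by
    intro q x
    have hid := hidem q ((0 : XT q), x)
    rw [hform q 0 x, hform q (cS • (0 : XT q) + h12 q x) (cS • x)] at hid
    have h1 := congrArg Prod.fst hid
    simp only [smul_zero, zero_add, smul_add, map_smul, smul_smul] at h1
    rcases hc01 with h | h
    · subst h; simpa using h1.symm
    · subst h; simp only [one_smul, one_mul] at h1
      exact add_eq_right.mp h1
  rcases hc01 with h | h
  · left
    intro q
    rw [Submodule.eq_bot_iff]
    intro u hu
    have := hφU q u hu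
    rw [show u = (u.1, u.2) from rfl, hform q u.1 u.2, h12z, h] at this
    simpa [Prod.ext_iff] using this.symm
  · right
    intro q
    rw [Submodule.eq_bot_iff]
    intro w hw
    have := hφW q w hw
    rw [show w = (w.1, w.2) from rfl, hform q w.1 w.2, h12z, h] at this
    simpa [Prod.ext_iff] using this

/-- consequences of an isomorphism between two extensions. -/
lemma iso_rel (Tm : RSp k s t XT XT) (Sm : RSp k s t XS XS)
    (hHomTS : HomZero k s t Tm Sm) (hEndT : EndTrivial k s t Tm)
    (hEndS : EndTrivial k s t Sm)
    (hTne : ∃ q, ∃ y : XT q, y ≠ 0) (hSne : ∃ q, ∃ x : XS q, x ≠ 0)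
    (f f' : RSp k s t XS XT)
    (h : RIso k s t (BExt k s t Tm Sm f) (BExt k s t Tm Sm f')) :
    ∃ cT cS : k, cT ≠ 0 ∧ cS ≠ 0 ∧
      cS • f' - cT • f ∈ LinearMap.range (dMap k s t Sm Tm) := by
  obtain ⟨φ, hhom, hbij⟩ := h
  have hhom' : ∀ a, (φ (t a)).comp (BExt k s t Tm Sm f a)
      - (BExt k s t Tm Sm f' a).comp (φ (s a)) = embB s t 0 a := by
    intro a; rw [map_zero, hhom a]; simp
  obtain ⟨cT, cS, h12, hform, hd⟩ :=
    keyBlocks s t Tm Sm hHomTS hEndT hEndS f f' 0 φ hhom'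
  refine ⟨cT, cS, ?_, ?_, ⟨h12, by rw [hd, zero_add]⟩⟩
  · rintro rfl
    obtain ⟨q0, y0, hy0⟩ := hTne
    have h1 : φ q0 (y0, 0) = φ q0 (0, 0) := by
      rw [hform, hform]; simp
    have := (hbij q0).1 h1
    exact hy0 (by simpa [Prod.ext_iff] using this)
  · rintro rfl
    obtain ⟨q0, x0, hx0⟩ := hSne
    obtain ⟨p, hp⟩ := (hbij q0).2 (0, x0)
    have := congrArg Prod.snd hp
    rw [show p = (p.1, p.2) from rfl, hform] at this
    simp only [zero_smul] at this
    exact hx0 this.symm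

end Aux3
section Aux4
set_option maxHeartbeats 2000000
variable {k : Type} [Field k] {V A : Type} [Fintype V] [Fintype A] [DecidableEq A]
variable (s t : A → V)
variable {XS XT : V → Type}
  [∀ q, AddCommGroup (XS q)] [∀ q, Module k (XS q)] [∀ q, FiniteDimensional k (XS q)]
  [∀ q, AddCommGroup (XT q)] [∀ q, Module k (XT q)] [∀ q, FiniteDimensional k (XT q)]
variable {ιS ιT : V → Type}

open Classical in
lemma stdVec_self (BasS : ∀ q, Module.Basis (ιS q) k (XS q)) (BasT : ∀ q, Module.Basis (ιT q) k (XT q))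
    (a0 : A) (b' : ιS (s a0)) (b : ιT (t a0)) (c0 : ιS (s a0)) :
    stdVec s t BasS BasT a0 b' b a0 ((BasS (s a0)) c0)
      = if c0 = b' then (BasT (t a0)) b else 0 := by
  classical
  simp [stdVec, Module.Basis.constr_basis]

lemma stdVec_ne (BasS : ∀ q, Module.Basis (ιS q) k (XS q)) (BasT : ∀ q, Module.Basis (ιT q) k (XT q))
    (a0 : A) (b' : ιS (s a0)) (b : ιT (t a0)) {a : A} (h : a ≠ a0) :
    stdVec s t BasS BasT a0 b' b a = 0 := by
  simp [stdVec, h]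

lemma tree_BExt (Tm : RSp k s t XT XT) (Sm : RSp k s t XS XS)
    (BasS : ∀ q, Module.Basis (ιS q) k (XS q)) (BasT : ∀ q, Module.Basis (ιT q) k (XT q))
    (hS : IsTreeBasis s t Sm BasS) (hT : IsTreeBasis s t Tm BasT)
    (a0 : A) (b' : ιS (s a0)) (b : ιT (t a0)) :
    ∃ (ι : V → Type) (Bas : ∀ q, Module.Basis (ι q) k (XT q × XS q)),
      IsTreeBasis s t (BExt k s t Tm Sm (stdVec s t BasS BasT a0 b' b)) Bas := by
  classical
  haveI : ∀ q, Finite (ιT q) := fun q => Module.Finite.finite_basis (BasT q)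
  haveI : ∀ q, Finite (ιS q) := fun q => Module.Finite.finite_basis (BasS q)
  set F := stdVec s t BasS BasT a0 b' b with hF
  set BB := BExt k s t Tm Sm F with hBB
  refine ⟨fun q => ιT q ⊕ ιS q, fun q => (BasT q).prod (BasS q), ?_, ?_⟩
  all_goals {
  -- entry computations
  have hXl : ∀ (a : A) (c0 : ιT (s a)),
      BB a (((BasT (s a)).prod (BasS (s a))) (Sum.inl c0))
        = (Tm a ((BasT (s a)) c0), 0) := by
    intro a c0
    rw [hBB, BExt_apply, Module.Basis.prod_apply_inl_fst, Module.Basis.prod_apply_inl_snd]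
    simp
  have hXr : ∀ (a : A) (c0 : ιS (s a)),
      BB a (((BasT (s a)).prod (BasS (s a))) (Sum.inr c0))
        = (F a ((BasS (s a)) c0), Sm a ((BasS (s a)) c0)) := by
    intro a c0
    rw [hBB, BExt_apply, Module.Basis.prod_apply_inr_fst, Module.Basis.prod_apply_inr_snd]
    simp
  have E11 : ∀ (a : A) (c0 : ιT (s a)) (c1 : ιT (t a)),
      (((BasT (t a)).prod (BasS (t a))).repr
        (BB a (((BasT (s a)).prod (BasS (s a))) (Sum.inl c0)))) (Sum.inl c1)
      = ((BasT (t a)).repr (Tm a ((BasT (s a)) c0))) c1 := by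
    intro a c0 c1
    rw [hXl, Module.Basis.prod_repr_inl]
  have E12 : ∀ (a : A) (c0 : ιT (s a)) (c1 : ιS (t a)),
      (((BasT (t a)).prod (BasS (t a))).repr
        (BB a (((BasT (s a)).prod (BasS (s a))) (Sum.inl c0)))) (Sum.inr c1)
      = 0 := by
    intro a c0 c1
    rw [hXl, Module.Basis.prod_repr_inr]
    simp
  have E21 : ∀ (a : A) (c0 : ιS (s a)) (c1 : ιT (t a)),
      (((BasT (t a)).prod (BasS (t a))).repr
        (BB a (((BasT (s a)).prod (BasS (s a))) (Sum.inr c0)))) (Sum.inl c1)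
      = ((BasT (t a)).repr (F a ((BasS (s a)) c0))) c1 := by
    intro a c0 c1
    rw [hXr, Module.Basis.prod_repr_inl]
  have E22 : ∀ (a : A) (c0 : ιS (s a)) (c1 : ιS (t a)),
      (((BasT (t a)).prod (BasS (t a))).repr
        (BB a (((BasT (s a)).prod (BasS (s a))) (Sum.inr c0)))) (Sum.inr c1)
      = ((BasS (t a)).repr (Sm a ((BasS (s a)) c0))) c1 := by
    intro a c0 c1
    rw [hXr, Module.Basis.prod_repr_inr]
  have hbrE : (((BasT (t a0)).prod (BasS (t a0))).repr
      (BB a0 (((BasT (s a0)).prod (BasS (s a0))) (Sum.inr b')))) (Sum.inl b) = 1 := by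
    rw [E21 a0 b' b, hF, stdVec_self, if_pos rfl, Module.Basis.repr_self, Finsupp.single_eq_same]
  first
  | { -- connectivity goal
    have hinjT : Function.Injective
        (fun v : Σ q, ιT q => (⟨v.1, Sum.inl v.2⟩ : Σ q, ιT q ⊕ ιS q)) := by
      rintro ⟨q, c⟩ ⟨q', c'⟩ h
      obtain ⟨rfl, h2⟩ := Sigma.mk.inj_iff.mp h
      obtain rfl := Sum.inl_injective (eq_of_heq h2)
      rfl
    have hinjS : Function.Injective
        (fun v : Σ q, ιS q => (⟨v.1, Sum.inr v.2⟩ : Σ q, ιT q ⊕ ιS q)) := by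
      rintro ⟨q, c⟩ ⟨q', c'⟩ h
      obtain ⟨rfl, h2⟩ := Sigma.mk.inj_iff.mp h
      obtain rfl := Sum.inr_injective (eq_of_heq h2)
      rfl
    have hadjT : ∀ {v w}, (coeffGraph s t Tm BasT).Adj v w →
        (coeffGraph s t BB (fun q => (BasT q).prod (BasS q))).Adj
          ⟨v.1, Sum.inl v.2⟩ ⟨w.1, Sum.inl w.2⟩ := by
      rintro v w ⟨hne, a, c0, c1, hval, hor⟩
      refine ⟨fun h => hne (hinjT h), a, Sum.inl c0, Sum.inl c1, ?_, ?_⟩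
      · show ¬ _ = 0
        rw [E11 a c0 c1]
        exact hval
      · rcases hor with ⟨h1, h2⟩ | ⟨h1, h2⟩
        · exact Or.inl ⟨by rw [h1], by rw [h2]⟩
        · exact Or.inr ⟨by rw [h1], by rw [h2]⟩
    have hadjS : ∀ {v w}, (coeffGraph s t Sm BasS).Adj v w →
        (coeffGraph s t BB (fun q => (BasT q).prod (BasS q))).Adj
          ⟨v.1, Sum.inr v.2⟩ ⟨w.1, Sum.inr w.2⟩ := by
      rintro v w ⟨hne, a, c0, c1, hval, hor⟩
      refine ⟨fun h => hne (hinjS h), a, Sum.inr c0, Sum.inr c1, ?_, ?_⟩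
      · show ¬ _ = 0
        rw [E22 a c0 c1]
        exact hval
      · rcases hor with ⟨h1, h2⟩ | ⟨h1, h2⟩
        · exact Or.inl ⟨by rw [h1], by rw [h2]⟩
        · exact Or.inr ⟨by rw [h1], by rw [h2]⟩
    have reachT : ∀ x y : Σ q, ιT q,
        (coeffGraph s t BB (fun q => (BasT q).prod (BasS q))).Reachable
          ⟨x.1, Sum.inl x.2⟩ ⟨y.1, Sum.inl y.2⟩ := by
      intro x y
      exact SimpleGraph.Reachable.map
        ⟨fun v : Σ q, ιT q => (⟨v.1, Sum.inl v.2⟩ : Σ q, ιT q ⊕ ιS q),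
          fun h => hadjT h⟩ (hT.1.preconnected x y)
    have reachS : ∀ x y : Σ q, ιS q,
        (coeffGraph s t BB (fun q => (BasT q).prod (BasS q))).Reachable
          ⟨x.1, Sum.inr x.2⟩ ⟨y.1, Sum.inr y.2⟩ := by
      intro x y
      exact SimpleGraph.Reachable.map
        ⟨fun v : Σ q, ιS q => (⟨v.1, Sum.inr v.2⟩ : Σ q, ιT q ⊕ ιS q),
          fun h => hadjS h⟩ (hS.1.preconnected x y)
    have hbr : (coeffGraph s t BB (fun q => (BasT q).prod (BasS q))).Adj
        ⟨t a0, Sum.inl b⟩ ⟨s a0, Sum.inr b'⟩ := by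
      refine ⟨?_, a0, Sum.inr b', Sum.inl b, ?_, Or.inr ⟨rfl, rfl⟩⟩
      · intro h
        simpa using congrArg (fun p : (Σ q, ιT q ⊕ ιS q) => p.2.isLeft) h
      · show ¬ _ = 0
        rw [hbrE]
        exact one_ne_zero
    rw [SimpleGraph.connected_iff]
    constructor
    · rintro ⟨q, c | c⟩ ⟨q', c' | c'⟩
      · exact reachT ⟨q, c⟩ ⟨q', c'⟩
      · exact (reachT ⟨q, c⟩ ⟨t a0, b⟩).trans
          (hbr.reachable.trans (reachS ⟨s a0, b'⟩ ⟨q', c'⟩))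
      · exact (reachS ⟨q, c⟩ ⟨s a0, b'⟩).trans
          (hbr.symm.reachable.trans (reachT ⟨t a0, b⟩ ⟨q', c'⟩))
      · exact reachS ⟨q, c⟩ ⟨q', c'⟩
    · exact ⟨⟨t a0, Sum.inl b⟩⟩ }
  | { -- counting goal
    show Nat.card {p : (a : A) × ((ιT (s a) ⊕ ιS (s a)) × (ιT (t a) ⊕ ιS (t a))) //
        (((BasT (t p.1)).prod (BasS (t p.1))).repr
          ((BB p.1) (((BasT (s p.1)).prod (BasS (s p.1))) p.2.1))) p.2.2 ≠ 0} + 1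
      = Nat.card (Σ q, ιT q ⊕ ιS q)
    let ET := {p : (a : A) × ιT (s a) × ιT (t a) //
      ((BasT (t p.1)).repr ((Tm p.1) ((BasT (s p.1)) p.2.1))) p.2.2 ≠ 0}
    let ES := {p : (a : A) × ιS (s a) × ιS (t a) //
      ((BasS (t p.1)).repr ((Sm p.1) ((BasS (s p.1)) p.2.1))) p.2.2 ≠ 0}
    let EB := {p : (a : A) × ((ιT (s a) ⊕ ιS (s a)) × (ιT (t a) ⊕ ιS (t a))) //
        (((BasT (t p.1)).prod (BasS (t p.1))).repr
          ((BB p.1) (((BasT (s p.1)).prod (BasS (s p.1))) p.2.1))) p.2.2 ≠ 0}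
    let Φ : (ET ⊕ ES ⊕ Unit) → EB := fun x =>
      match x with
      | Sum.inl ⟨⟨a, c0, c1⟩, h⟩ =>
          ⟨⟨a, (Sum.inl c0, Sum.inl c1)⟩, by
            show ¬ _ = 0
            rw [E11 a c0 c1]; exact h⟩
      | Sum.inr (Sum.inl ⟨⟨a, c0, c1⟩, h⟩) =>
          ⟨⟨a, (Sum.inr c0, Sum.inr c1)⟩, by
            show ¬ _ = 0
            rw [E22 a c0 c1]; exact h⟩
      | Sum.inr (Sum.inr _) =>
          ⟨⟨a0, (Sum.inr b', Sum.inl b)⟩, by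
            show ¬ _ = 0
            rw [hbrE]; exact one_ne_zero⟩
    have hbij : Function.Bijective Φ := by
      constructor
      · rintro (⟨⟨a, c0, c1⟩, h⟩ | ⟨⟨a, c0, c1⟩, h⟩ | ⟨⟩)
          (⟨⟨a', c0', c1'⟩, h'⟩ | ⟨⟨a', c0', c1'⟩, h'⟩ | ⟨⟩) hxy
        · have h1 : (⟨a, (Sum.inl c0, Sum.inl c1)⟩ :
              (a : A) × ((ιT (s a) ⊕ ιS (s a)) × (ιT (t a) ⊕ ιS (t a))))
              = ⟨a', (Sum.inl c0', Sum.inl c1')⟩ := congrArg Subtype.val hxy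
          obtain ⟨rfl, h2⟩ := Sigma.mk.inj_iff.mp h1
          have h3 := eq_of_heq h2
          obtain rfl := Sum.inl_injective (congrArg Prod.fst h3)
          obtain rfl := Sum.inl_injective (congrArg Prod.snd h3)
          rfl
        · have h1 : (⟨a, (Sum.inl c0, Sum.inl c1)⟩ :
              (a : A) × ((ιT (s a) ⊕ ιS (s a)) × (ιT (t a) ⊕ ιS (t a))))
              = ⟨a', (Sum.inr c0', Sum.inr c1')⟩ := congrArg Subtype.val hxy
          have := congrArg (fun p : ((a : A) ×
            ((ιT (s a) ⊕ ιS (s a)) × (ιT (t a) ⊕ ιS (t a)))) => p.2.1.isLeft) h1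
          simp at this
        · have h1 : (⟨a, (Sum.inl c0, Sum.inl c1)⟩ :
              (a : A) × ((ιT (s a) ⊕ ιS (s a)) × (ιT (t a) ⊕ ιS (t a))))
              = ⟨a0, (Sum.inr b', Sum.inl b)⟩ := congrArg Subtype.val hxy
          have := congrArg (fun p : ((a : A) ×
            ((ιT (s a) ⊕ ιS (s a)) × (ιT (t a) ⊕ ιS (t a)))) => p.2.1.isLeft) h1
          simp at this
        · have h1 : (⟨a, (Sum.inr c0, Sum.inr c1)⟩ :
              (a : A) × ((ιT (s a) ⊕ ιS (s a)) × (ιT (t a) ⊕ ιS (t a))))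
              = ⟨a', (Sum.inl c0', Sum.inl c1')⟩ := congrArg Subtype.val hxy
          have := congrArg (fun p : ((a : A) ×
            ((ιT (s a) ⊕ ιS (s a)) × (ιT (t a) ⊕ ιS (t a)))) => p.2.1.isLeft) h1
          simp at this
        · have h1 : (⟨a, (Sum.inr c0, Sum.inr c1)⟩ :
              (a : A) × ((ιT (s a) ⊕ ιS (s a)) × (ιT (t a) ⊕ ιS (t a))))
              = ⟨a', (Sum.inr c0', Sum.inr c1')⟩ := congrArg Subtype.val hxy
          obtain ⟨rfl, h2⟩ := Sigma.mk.inj_iff.mp h1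
          have h3 := eq_of_heq h2
          obtain rfl := Sum.inr_injective (congrArg Prod.fst h3)
          obtain rfl := Sum.inr_injective (congrArg Prod.snd h3)
          rfl
        · have h1 : (⟨a, (Sum.inr c0, Sum.inr c1)⟩ :
              (a : A) × ((ιT (s a) ⊕ ιS (s a)) × (ιT (t a) ⊕ ιS (t a))))
              = ⟨a0, (Sum.inr b', Sum.inl b)⟩ := congrArg Subtype.val hxy
          have := congrArg (fun p : ((a : A) ×
            ((ιT (s a) ⊕ ιS (s a)) × (ιT (t a) ⊕ ιS (t a)))) => p.2.2.isLeft) h1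
          simp at this
        · have h1 : (⟨a0, (Sum.inr b', Sum.inl b)⟩ :
              (a : A) × ((ιT (s a) ⊕ ιS (s a)) × (ιT (t a) ⊕ ιS (t a))))
              = ⟨a', (Sum.inl c0', Sum.inl c1')⟩ := congrArg Subtype.val hxy
          have := congrArg (fun p : ((a : A) ×
            ((ιT (s a) ⊕ ιS (s a)) × (ιT (t a) ⊕ ιS (t a)))) => p.2.1.isLeft) h1
          simp at this
        · have h1 : (⟨a0, (Sum.inr b', Sum.inl b)⟩ :
              (a : A) × ((ιT (s a) ⊕ ιS (s a)) × (ιT (t a) ⊕ ιS (t a))))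
              = ⟨a', (Sum.inr c0', Sum.inr c1')⟩ := congrArg Subtype.val hxy
          have := congrArg (fun p : ((a : A) ×
            ((ιT (s a) ⊕ ιS (s a)) × (ιT (t a) ⊕ ιS (t a)))) => p.2.2.isLeft) h1
          simp at this
        · rfl
      · rintro ⟨⟨a, v0, v1⟩, h⟩
        rcases v0 with c0 | c0 <;> rcases v1 with c1 | c1
        · refine ⟨Sum.inl ⟨⟨a, c0, c1⟩, ?_⟩, rfl⟩
          rw [← E11 a c0 c1]
          exact h
        · exfalso
          exact h (E12 a c0 c1)
        · -- the bridge case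
          have ha : a = a0 := by
            by_contra hne
            apply h
            show _ = 0
            rw [E21 a c0 c1, hF, stdVec_ne s t BasS BasT a0 b' b hne]
            simp
          subst ha
          have hc0 : c0 = b' := by
            by_contra hne
            apply h
            show _ = 0
            rw [E21 a c0 c1, hF, stdVec_self, if_neg hne]
            simp
          subst hc0
          have hc1 : c1 = b := by
            by_contra hne
            apply h
            show _ = 0
            rw [E21 a c0 c1, hF, stdVec_self, if_pos rfl, Module.Basis.repr_self]
            exact Finsupp.single_eq_of_ne (fun hh => hne hh)
          subst hc1
          exact ⟨Sum.inr (Sum.inr ()), rfl⟩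
        · refine ⟨Sum.inr (Sum.inl ⟨⟨a, c0, c1⟩, ?_⟩), rfl⟩
          rw [← E22 a c0 c1]
          exact h
    have hcard : Nat.card (ET ⊕ ES ⊕ Unit) = Nat.card EB :=
      Nat.card_congr (Equiv.ofBijective Φ hbij)
    have hpu : Nat.card Unit = 1 := Nat.card_unique
    rw [Nat.card_sum, Nat.card_sum, hpu] at hcard
    have hvert : Nat.card (Σ q, ιT q ⊕ ιS q)
        = Nat.card (Σ q, ιT q) + Nat.card (Σ q, ιS q) := by
      rw [Nat.card_congr (Equiv.sigmaSumDistrib ιT ιS), Nat.card_sum]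
    have h1 : Nat.card ET + 1 = Nat.card (Σ q, ιT q) := hT.2
    have h2 : Nat.card ES + 1 = Nat.card (Σ q, ιS q) := hS.2
    show Nat.card EB + 1 = Nat.card (Σ q, ιT q ⊕ ιS q)
    omega }
  }
end Aux4

set_option maxHeartbeats 2000000 in
/-- Theorem `treecells`.  Let `S`, `T` be tree modules,
`(S,U_S)`, `(T,U_T)` cells of Schurian representations with `Hom(T(μ),S(λ)) = 0`, and
let `{e_1,…,e_n} ⊆ R(S,T)` be a universal tree-shaped basis for `(U_T,U_S)`.  Then the
middle terms `B_i` of the extensions `0 → T → B_i → S → 0` given by the `e_i` are tree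
modules and there are affine subspaces `A_i ⊆ R(B_i,B_i)` with `dim A_i = i − 1`
(`= i.val` in the `Fin n` indexing below) such that each `(B_i,A_i)` is a cell of
indecomposable representations and `{(B_i,A_i)}_i` is a mosaic. -/
theorem statement10
    {ιS ιT : V → Type}
    (Sm : RSp k s t XS XS) (Tm : RSp k s t XT XT)
    (BasS : ∀ q, Module.Basis (ιS q) k (XS q)) (BasT : ∀ q, Module.Basis (ιT q) k (XT q))
    (hStree : Indec k s t Sm ∧ IsTreeBasis s t Sm BasS)
    (hTtree : Indec k s t Tm ∧ IsTreeBasis s t Tm BasT)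
    (US : Submodule k (RSp k s t XS XS)) (UT : Submodule k (RSp k s t XT XT))
    -- (S, U_S) is a cell of Schurian representations
    (hInjS : ∀ lam ∈ US, ∀ lam' ∈ US,
      lam - lam' ∈ LinearMap.range (dMap k s t Sm Sm) → lam = lam')
    (hStrongS : Strong k s t Sm US) (hSepS : Separating k s t Sm US)
    (hSchurS : ∀ lam ∈ US, EndTrivial k s t (Sm + lam))
    -- (T, U_T) is a cell of Schurian representations
    (hInjT : ∀ mu ∈ UT, ∀ mu' ∈ UT,
      mu - mu' ∈ LinearMap.range (dMap k s t Tm Tm) → mu = mu')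
    (hStrongT : Strong k s t Tm UT) (hSepT : Separating k s t Tm UT)
    (hSchurT : ∀ mu ∈ UT, EndTrivial k s t (Tm + mu))
    -- Hom(T(μ), S(λ)) = 0 for all (λ,μ) ∈ U_S × U_T
    (hHom : ∀ lam ∈ US, ∀ mu ∈ UT, HomZero k s t (Tm + mu) (Sm + lam))
    -- R_{S,T} = {e_1,…,e_n} is a universal tree-shaped basis for (U_T, U_S)
    (n : ℕ) (e : Fin n → RSp k s t XS XT)
    (hstd : ∀ i, ∃ (a0 : A) (b' : ιS (s a0)) (b : ιT (t a0)),
      e i = stdVec s t BasS BasT a0 b' b)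
    (hbasis : ∀ lam ∈ US, ∀ mu ∈ UT,
      LinearIndependent k (fun i => Submodule.Quotient.mk
        (p := LinearMap.range (dMap k s t (Sm + lam) (Tm + mu))) (e i)) ∧
      Submodule.span k (Set.range (fun i => Submodule.Quotient.mk
        (p := LinearMap.range (dMap k s t (Sm + lam) (Tm + mu))) (e i))) = ⊤) :
    ∃ (W : Fin n → Submodule k
        (RSp k s t (fun q => XT q × XS q) (fun q => XT q × XS q)))
      (v : Fin n → RSp k s t (fun q => XT q × XS q) (fun q => XT q × XS q)),
      ∀ i : Fin n,
        -- B_i is a tree module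
        IsTreeModule s t (BExt k s t Tm Sm (e i)) ∧
        -- A_i := v i + W i is an affine subspace of dimension i − 1 (= i.val)
        Module.finrank k (W i) = (i : ℕ) ∧
        -- A_i represents a subset of Ext(B_i, B_i)
        (∀ nu ∈ (fun w => v i + w) '' (W i : Set _),
          ∀ nu' ∈ (fun w => v i + w) '' (W i : Set _),
          nu - nu' ∈ LinearMap.range
            (dMap k s t (BExt k s t Tm Sm (e i)) (BExt k s t Tm Sm (e i))) →
          nu = nu') ∧
        -- (B_i, A_i) is strong: every B_i(ν), ν ∈ A_i, is indecomposable
        (∀ nu ∈ (fun w => v i + w) '' (W i : Set _),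
          Indec k s t (BExt k s t Tm Sm (e i) + nu)) ∧
        -- (B_i, A_i) is separating
        (∀ nu ∈ (fun w => v i + w) '' (W i : Set _),
          ∀ nu' ∈ (fun w => v i + w) '' (W i : Set _),
          RIso k s t (BExt k s t Tm Sm (e i) + nu) (BExt k s t Tm Sm (e i) + nu') →
          nu = nu') ∧
        -- mosaic: B_i(ν) ≅ B_j(ν') implies i = j
        (∀ j : Fin n, ∀ nu ∈ (fun w => v i + w) '' (W i : Set _),
          ∀ nu' ∈ (fun w => v j + w) '' (W j : Set _),
          RIso k s t (BExt k s t Tm Sm (e i) + nu) (BExt k s t Tm Sm (e j) + nu') →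
          i = j) := by
  classical
  have hTne : ∃ q, ∃ y : XT q, y ≠ 0 := hTtree.1.1
  have hSne : ∃ q, ∃ x : XS q, x ≠ 0 := hStree.1.1
  have hHomTS : HomZero k s t Tm Sm := by
    have := hHom 0 US.zero_mem 0 UT.zero_mem; simpa using this
  have hEndT : EndTrivial k s t Tm := by
    have := hSchurT 0 UT.zero_mem; simpa using this
  have hEndS : EndTrivial k s t Sm := by
    have := hSchurS 0 US.zero_mem; simpa using this
  have hb : LinearIndependent k (fun l => Submodule.Quotient.mk
      (p := LinearMap.range (dMap k s t Sm Tm)) (e l)) := by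
    have h := (hbasis 0 US.zero_mem 0 UT.zero_mem).1
    rw [show Sm + 0 = Sm from add_zero _, show Tm + 0 = Tm from add_zero _] at h
    exact h
  have hε : LinearIndependent k
      (⇑(LinearMap.range (dMap k s t Sm Tm)).mkQ ∘ e) := hb
  have he : LinearIndependent k e := LinearIndependent.of_comp _ hε
  -- key quotient fact
  have hmkq : ∀ c : Fin n →₀ k,
      Finsupp.linearCombination k e c ∈ LinearMap.range (dMap k s t Sm Tm) → c = 0 := by
    intro c hc
    have h0 : (LinearMap.range (dMap k s t Sm Tm)).mkQ (Finsupp.linearCombination k e c)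
        = 0 := by
      rw [Submodule.mkQ_apply, Submodule.Quotient.mk_eq_zero]; exact hc
    rw [Finsupp.apply_linearCombination] at h0
    exact linearIndependent_iff.mp hε c h0
  set sp : Fin n → Submodule k (RSp k s t XS XT) := fun i =>
    Submodule.span k (e '' {l : Fin n | l.val < i.val}) with hsp
  have hrep : ∀ (j : Fin n) (g : RSp k s t XS XT), g ∈ sp j →
      ∃ c : Fin n →₀ k, (∀ l : Fin n, ¬ l.val < j.val → c l = 0) ∧
        Finsupp.linearCombination k e c = g := by
    intro j g hg
    rw [hsp] at hg
    obtain ⟨c, hcs, hcg⟩ := (Finsupp.mem_span_image_iff_linearCombination k).mp hg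
    refine ⟨c, ?_, hcg⟩
    intro l hl
    by_contra h0
    exact hl ((Finsupp.mem_supported k c).mp hcs (Finsupp.mem_support_iff.mpr h0))
  refine ⟨fun i => Submodule.map (embB s t) (sp i), fun _ => 0, ?_⟩
  intro i
  obtain ⟨a0, b', b, hei⟩ := hstd i
  have hmem : ∀ (j : Fin n) ν, ν ∈ (fun w => (0 : RSp k s t (fun q => XT q × XS q)
      (fun q => XT q × XS q)) + w) '' ((Submodule.map (embB s t) (sp j)) : Set _) →
      ∃ g, g ∈ sp j ∧ embB s t g = ν := by
    rintro j ν ⟨w, hw, rfl⟩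
    obtain ⟨g, hg, rfl⟩ := hw
    exact ⟨g, hg, by simp⟩
  -- the element e i + g is not in the range of d for g in sp i
  have hnotrange : ∀ g ∈ sp i, (e i + g) ∉ LinearMap.range (dMap k s t Sm Tm) := by
    intro g hg hmem'
    obtain ⟨c, hcs, rfl⟩ := hrep i g hg
    have : Finsupp.linearCombination k e (Finsupp.single i 1 + c)
        ∈ LinearMap.range (dMap k s t Sm Tm) := by
      rw [map_add, Finsupp.linearCombination_single, one_smul]; exact hmem'
    have h0 := hmkq _ this
    have h1 := DFunLike.congr_fun h0 i
    simp only [Finsupp.add_apply, Finsupp.single_eq_same, Finsupp.coe_zero,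
      Pi.zero_apply, hcs i (lt_irrefl _), add_zero] at h1
    exact one_ne_zero h1
  refine ⟨?_, ?_, ?_, ?_, ?_, ?_⟩
  · -- tree module
    constructor
    · have h0 := hnotrange 0 (Submodule.zero_mem _)
      rw [add_zero] at h0
      exact indec_BExt s t Tm Sm hHomTS hEndT hEndS hTne (e i) h0
    · rw [hei]
      exact tree_BExt s t Tm Sm BasS BasT hStree.2 hTtree.2 a0 b' b
  · -- finrank
    have h1 : Module.finrank k (sp i) = i.val := by
      have hseteq : e '' {l : Fin n | l.val < i.val}
          = Set.range (e ∘ Fin.castLE i.isLt.le) := by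
        ext x
        constructor
        · rintro ⟨l, hl, rfl⟩
          exact ⟨⟨l.val, hl⟩, congrArg e (Fin.ext rfl)⟩
        · rintro ⟨j, rfl⟩
          exact ⟨Fin.castLE i.isLt.le j, j.isLt, rfl⟩
      have hspi : sp i = Submodule.span k (Set.range (e ∘ Fin.castLE i.isLt.le)) := by
        simp only [hsp]
        rw [hseteq]
      rw [hspi, finrank_span_eq_card (he.comp _ (Fin.castLE_injective i.isLt.le)),
        Fintype.card_fin]
    rw [← LinearEquiv.finrank_eq
      (Submodule.equivMapOfInjective (embB s t) (embB_inj s t) (sp i)), h1]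
  · -- Ext-injectivity of the affine subspace
    intro ν hν ν' hν' hrange
    obtain ⟨g, hg, rfl⟩ := hmem i ν hν
    obtain ⟨g', hg', rfl⟩ := hmem i ν' hν'
    obtain ⟨φ, hφ⟩ := hrange
    rw [← map_sub] at hφ
    have hφa : ∀ a, (φ (t a)).comp (BExt k s t Tm Sm (e i) a)
        - (BExt k s t Tm Sm (e i) a).comp (φ (s a)) = embB s t (g - g') a :=
      fun a => congrFun hφ a
    obtain ⟨cT, cS, h12, hform, hd⟩ :=
      keyBlocks s t Tm Sm hHomTS hEndT hEndS (e i) (e i) (g - g') φ hφa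
    obtain ⟨c, hcs, hcg⟩ := hrep i g hg
    obtain ⟨c', hcs', hcg'⟩ := hrep i g' hg'
    have hcomb : Finsupp.linearCombination k e (c - c' + Finsupp.single i (cS - cT))
        ∈ LinearMap.range (dMap k s t Sm Tm) := by
      have : Finsupp.linearCombination k e (c - c' + Finsupp.single i (cS - cT))
          = g - g' + cS • e i - cT • e i := by
        rw [map_add, map_sub, hcg, hcg', Finsupp.linearCombination_single, sub_smul]
        abel
      rw [this, ← hd]
      exact ⟨h12, rfl⟩
    have h0 := hmkq _ hcomb
    have hcc : c = c' := by
      ext l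
      have h1 := DFunLike.congr_fun h0 l
      simp only [Finsupp.add_apply, Finsupp.sub_apply, Finsupp.single_apply,
        Finsupp.coe_zero, Pi.zero_apply] at h1
      by_cases hil : i = l
      · subst hil
        rw [hcs i (lt_irrefl _), hcs' i (lt_irrefl _)]
      · rw [if_neg hil, add_zero] at h1
        exact sub_eq_zero.mp h1
    rw [hcg.symm, hcg'.symm, hcc]
  · -- strong
    intro ν hν
    obtain ⟨g, hg, rfl⟩ := hmem i ν hν
    rw [BExt_add]
    exact indec_BExt s t Tm Sm hHomTS hEndT hEndS hTne (e i + g) (hnotrange g hg)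
  · -- separating
    intro ν hν ν' hν' hiso
    obtain ⟨g, hg, rfl⟩ := hmem i ν hν
    obtain ⟨g', hg', rfl⟩ := hmem i ν' hν'
    rw [BExt_add, BExt_add] at hiso
    obtain ⟨cT, cS, hcT, hcS, hmem'⟩ :=
      iso_rel s t Tm Sm hHomTS hEndT hEndS hTne hSne _ _ hiso
    obtain ⟨c, hcs, hcg⟩ := hrep i g hg
    obtain ⟨c', hcs', hcg'⟩ := hrep i g' hg'
    have hcomb : Finsupp.linearCombination k e
        (Finsupp.single i (cS - cT) + cS • c' - cT • c)
        ∈ LinearMap.range (dMap k s t Sm Tm) := by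
      have : Finsupp.linearCombination k e
          (Finsupp.single i (cS - cT) + cS • c' - cT • c)
          = cS • (e i + g') - cT • (e i + g) := by
        rw [map_sub, map_add, Finsupp.linearCombination_single, map_smul, map_smul,
          hcg, hcg', sub_smul, smul_add, smul_add]
        abel
      rw [this]; exact hmem'
    have h0 := hmkq _ hcomb
    have hScT : cS = cT := by
      have h1 := DFunLike.congr_fun h0 i
      simp only [Finsupp.sub_apply, Finsupp.add_apply, Finsupp.single_eq_same,
        Finsupp.smul_apply, hcs i (lt_irrefl _), hcs' i (lt_irrefl _),
        Finsupp.coe_zero, Pi.zero_apply, smul_zero, sub_zero, add_zero] at h1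
      exact sub_eq_zero.mp h1
    have hcc : c = c' := by
      ext l
      have h1 := DFunLike.congr_fun h0 l
      simp only [Finsupp.sub_apply, Finsupp.add_apply, Finsupp.single_apply,
        Finsupp.smul_apply, Finsupp.coe_zero, Pi.zero_apply, smul_eq_mul] at h1
      rw [hScT] at h1
      by_cases hil : i = l
      · subst hil
        rw [hcs i (lt_irrefl _), hcs' i (lt_irrefl _)]
      · rw [if_neg hil] at h1
        have h2 : cT * (c' l - c l) = 0 := by
          rw [mul_sub]
          calc cT * c' l - cT * c l = cT - cT + (cT * c' l - cT * c l) := by ring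
            _ = 0 := by rw [← h1]; ring
        have h3 := (mul_eq_zero.mp h2).resolve_left (hScT ▸ hcT)
        exact (sub_eq_zero.mp h3).symm
    rw [hcg.symm, hcg'.symm, hcc]
  · -- mosaic
    intro j ν hν ν' hν' hiso
    obtain ⟨g, hg, rfl⟩ := hmem i ν hν
    obtain ⟨g', hg', rfl⟩ := hmem j ν' hν'
    rw [BExt_add, BExt_add] at hiso
    obtain ⟨cT, cS, hcT, hcS, hmem'⟩ :=
      iso_rel s t Tm Sm hHomTS hEndT hEndS hTne hSne _ _ hiso
    obtain ⟨c, hcs, hcg⟩ := hrep i g hg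
    obtain ⟨c', hcs', hcg'⟩ := hrep j g' hg'
    have hcomb : Finsupp.linearCombination k e
        (Finsupp.single j cS - Finsupp.single i cT + cS • c' - cT • c)
        ∈ LinearMap.range (dMap k s t Sm Tm) := by
      have : Finsupp.linearCombination k e
          (Finsupp.single j cS - Finsupp.single i cT + cS • c' - cT • c)
          = cS • (e j + g') - cT • (e i + g) := by
        rw [map_sub, map_add, map_sub, Finsupp.linearCombination_single,
          Finsupp.linearCombination_single, map_smul, map_smul,
          hcg, hcg', smul_add, smul_add]
        abel
      rw [this]; exact hmem'
    have h0 := hmkq _ hcomb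
    by_contra hij
    rcases lt_trichotomy i.val j.val with hlt | heq | hgt
    · have h1 := DFunLike.congr_fun h0 j
      simp only [Finsupp.sub_apply, Finsupp.add_apply, Finsupp.smul_apply,
        Finsupp.coe_zero, Pi.zero_apply, smul_eq_mul, Finsupp.single_eq_same,
        Finsupp.single_eq_of_ne (show j ≠ i from fun h => hij h.symm),
        hcs' j (lt_irrefl _), hcs j (fun h => lt_asymm hlt h),
        mul_zero, sub_zero, add_zero] at h1
      exact hcS h1
    · exact hij (Fin.ext heq)
    · have h1 := DFunLike.congr_fun h0 i
      simp only [Finsupp.sub_apply, Finsupp.add_apply, Finsupp.smul_apply,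
        Finsupp.coe_zero, Pi.zero_apply, smul_eq_mul, Finsupp.single_eq_same,
        Finsupp.single_eq_of_ne (show i ≠ j from fun h => hij h),
        hcs i (lt_irrefl _), hcs' i (fun h => lt_asymm hgt h),
        mul_zero, sub_zero, add_zero, zero_sub] at h1
      exact hcT (neg_eq_zero.mp h1)

end Tree
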